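/- Consider a triangular system of m+1 coupled cut Laguerre recursions: for 0 ≤ i ≤ m−1, a^i_{j−1} − (2j+α_i+1−x)·a^i_j + (j+1)(j+α_i+1)·a^i_{j+1} − χ_i·a^{i+1}_{j+q_i} = 0, together with the uncoupled top recursion a^m_{j−1} − (2j+α_m+1−x)·a^m_j + (j+1)(j+α_m+1)·a^m_{j+1} = 0 for 0 ≤ j ≤ κ with boundary zero conditions. Suppose k_i := (α_m − α_i)/2 are positive integers for i < m (k_m := 0) and q_i = 1 − k_i + k_{i+1}. If x is a root of L^{α_m}_{κ+1}, then setting a^i_j(x) = a^m_0·Γ_{m−1,i}·Γ(α_m+1)·L^{α_m}_{j−k_i}(x) (with L^{α_m}_n := 0 for n < 0 and Γ_{m−1,i} := ∏_{t=i}^{m−1} 4χ_t/(α_m²−α_t²), Γ_{m−1,m} := 1) yields a nontrivial solution of the entire system. -/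

import Mathlib

open Real Finset

/-- Generalized Laguerre polynomial `𝓛_n^α(x)`. -/
noncomputable def glag (α : ℝ) (n : ℕ) (x : ℝ) : ℝ :=
  ∑ k ∈ Finset.range (n + 1),
    (-1 : ℝ) ^ k * Real.Gamma ((n : ℝ) + α + 1) /
      (Real.Gamma ((k : ℝ) + α + 1) * (Nat.factorial (n - k) : ℝ) * (Nat.factorial k : ℝ)) * x ^ k

/-- Rescaled (Sonine) Laguerre polynomial `L_n^α(x) = 𝓛_n^α(x)/Γ(n+α+1)`. -/
noncomputable def slag (α : ℝ) (n : ℕ) (x : ℝ) : ℝ :=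
  glag α n x / Real.Gamma ((n : ℝ) + α + 1)

/-- Rescaled Laguerre polynomial with integer index, zero for negative index. -/
noncomputable def slagZ (α : ℝ) (m : ℤ) (x : ℝ) : ℝ :=
  if 0 ≤ m then slag α m.toNat x else 0


noncomputable def lc (α : ℝ) (N j : ℕ) : ℝ :=
  (-1 : ℝ) ^ j / (Real.Gamma ((j : ℝ) + α + 1) * (Nat.factorial (N - j) : ℝ) * (Nat.factorial j : ℝ))

lemma gam_pos (α : ℝ) (hα : -1 < α) (k : ℕ) : 0 < Real.Gamma ((k:ℝ) + α + 1) := by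
  apply Real.Gamma_pos_of_pos
  have : (0:ℝ) ≤ k := Nat.cast_nonneg k
  linarith

lemma gam_succ (α : ℝ) (hα : -1 < α) (k : ℕ) :
    Real.Gamma ((k:ℝ) + 1 + α + 1) = ((k:ℝ) + α + 1) * Real.Gamma ((k:ℝ) + α + 1) := by
  have hne : (k:ℝ) + α + 1 ≠ 0 := by
    have : (0:ℝ) ≤ k := Nat.cast_nonneg k
    intro h; linarith [hα]
  rw [show ((k:ℝ) + 1 + α + 1) = ((k:ℝ) + α + 1) + 1 by ring, Real.Gamma_add_one hne]

/-- interior coefficient identity -/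
lemma lc_interior (α : ℝ) (hα : -1 < α) (n j : ℕ) (hj : j ≤ n) :
    lc α n j - (2*(n:ℝ)+α+3) * lc α (n+1) j
      + (if j = 0 then 0 else lc α (n+1) (j-1))
      + ((n:ℝ)+2)*((n:ℝ)+α+2) * lc α (n+2) j = 0 := by
  obtain ⟨d, rfl⟩ := Nat.exists_eq_add_of_le hj
  have hGj := (gam_pos α hα j).ne'
  have hfd : ((Nat.factorial d : ℕ) : ℝ) ≠ 0 := Nat.cast_ne_zero.mpr (Nat.factorial_ne_zero _)
  have hfj : ((Nat.factorial j : ℕ) : ℝ) ≠ 0 := Nat.cast_ne_zero.mpr (Nat.factorial_ne_zero _)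
  have hd1 : ((d:ℝ)+1) ≠ 0 := by positivity
  have hd2 : ((d:ℝ)+2) ≠ 0 := by positivity
  cases j with
  | zero =>
    simp only [if_pos rfl, lc]
    simp only [Nat.zero_add, Nat.sub_zero, Nat.cast_zero, Nat.factorial_zero, pow_zero]
    have h1 : Real.Gamma (α + 1) ≠ 0 := by
      have := gam_pos α hα 0; push_cast at this; rw [zero_add] at this; exact this.ne'
    push_cast [Nat.factorial_succ]
    rw [zero_add]
    field_simp
    ring
  | succ i =>
    simp only [if_neg (Nat.succ_ne_zero i), lc, Nat.succ_sub_one]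
    have hGi := (gam_pos α hα i).ne'
    have hfi : ((Nat.factorial i : ℕ) : ℝ) ≠ 0 := Nat.cast_ne_zero.mpr (Nat.factorial_ne_zero _)
    have hsub1 : i + 1 + d - (i+1) = d := by omega
    have hsub2 : i + 1 + d + 1 - (i+1) = d + 1 := by omega
    have hsub3 : i + 1 + d + 2 - (i+1) = d + 2 := by omega
    have hsub4 : i + 1 + d + 1 - i = d + 2 := by omega
    rw [hsub1, hsub2, hsub3, hsub4]
    have hg := gam_succ α hα i
    push_cast [Nat.factorial_succ] at *
    rw [hg]
    have hne : (i:ℝ) + α + 1 ≠ 0 := by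
      have : (0:ℝ) ≤ i := Nat.cast_nonneg i
      intro h; linarith
    field_simp
    ring

/-- boundary coefficient at x^{n+1} -/
lemma lc_top1 (α : ℝ) (hα : -1 < α) (n : ℕ) :
    -(2*(n:ℝ)+α+3) * lc α (n+1) (n+1) + lc α (n+1) n
      + ((n:ℝ)+2)*((n:ℝ)+α+2) * lc α (n+2) (n+1) = 0 := by
  simp only [lc, Nat.sub_self, Nat.add_sub_cancel_left, Nat.factorial_zero]
  simp only [show n + 1 - n = 1 from by omega, show n + 2 - (n + 1) = 1 from by omega]
  have hGn := (gam_pos α hα n).ne'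
  have hfn : ((Nat.factorial n : ℕ) : ℝ) ≠ 0 := Nat.cast_ne_zero.mpr (Nat.factorial_ne_zero _)
  have hg := gam_succ α hα n
  have hne : (n:ℝ) + α + 1 ≠ 0 := by
    have : (0:ℝ) ≤ n := Nat.cast_nonneg n
    intro h; linarith
  have hd1 : ((n:ℝ)+1) ≠ 0 := by positivity
  push_cast [Nat.factorial_succ, pow_succ]
  rw [hg]
  field_simp
  ring

/-- boundary coefficient at x^{n+2} -/
lemma lc_top2 (α : ℝ) (hα : -1 < α) (n : ℕ) :
    lc α (n+1) (n+1) + ((n:ℝ)+2)*((n:ℝ)+α+2) * lc α (n+2) (n+2) = 0 := by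
  simp only [lc, Nat.sub_self, Nat.factorial_zero]
  have hGn := (gam_pos α hα (n+1)).ne'
  have hfn : ((Nat.factorial (n+1) : ℕ) : ℝ) ≠ 0 := Nat.cast_ne_zero.mpr (Nat.factorial_ne_zero _)
  have hg : Real.Gamma ((n:ℝ) + 2 + α + 1) = ((n:ℝ) + 1 + α + 1) * Real.Gamma ((n:ℝ) + 1 + α + 1) := by
    have := gam_succ α hα (n+1); push_cast at this
    rw [show ((n:ℝ) + 2 + α + 1) = ((n:ℝ) + 1 + 1 + α + 1) by ring]; exact this
  have hne : (n:ℝ) + 1 + α + 1 ≠ 0 := by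
    have : (0:ℝ) ≤ n := Nat.cast_nonneg n
    intro h; linarith
  have hd2 : ((n:ℝ)+2) ≠ 0 := by positivity
  have hd1 : ((n:ℝ)+1) ≠ 0 := by positivity
  have hGn' : Real.Gamma ((n:ℝ)+1+α+1) ≠ 0 := by
    have := hGn; push_cast at this; exact this
  have hfn' : ((Nat.factorial n : ℕ) : ℝ) ≠ 0 := Nat.cast_ne_zero.mpr (Nat.factorial_ne_zero _)
  have hne2 : (n:ℝ) + α + 2 ≠ 0 := by
    have : (0:ℝ) ≤ n := Nat.cast_nonneg n
    intro h; linarith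
  push_cast [Nat.factorial_succ, pow_succ]
  rw [hg]
  field_simp
  ring

lemma slag_eq' (α : ℝ) (hα : -1 < α) (n : ℕ) (x : ℝ) :
    slag α n x = ∑ j ∈ Finset.range (n + 1), lc α n j * x ^ j := by
  have hG : Real.Gamma ((n:ℝ) + α + 1) ≠ 0 := (gam_pos α hα n).ne'
  rw [slag, glag, Finset.sum_div]
  refine Finset.sum_congr rfl fun j hj => ?_
  have hGk : Real.Gamma ((j:ℝ) + α + 1) ≠ 0 := (gam_pos α hα j).ne'
  have h1 : ((Nat.factorial (n-j) : ℕ) : ℝ) ≠ 0 := Nat.cast_ne_zero.mpr (Nat.factorial_ne_zero _)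
  have h2 : ((Nat.factorial j : ℕ) : ℝ) ≠ 0 := Nat.cast_ne_zero.mpr (Nat.factorial_ne_zero _)
  rw [lc]
  field_simp

lemma slag_rec_succ (α : ℝ) (hα : -1 < α) (n : ℕ) (x : ℝ) :
    slag α n x - (2*(n:ℝ)+α+3-x) * slag α (n+1) x
      + ((n:ℝ)+2)*((n:ℝ)+α+2) * slag α (n+2) x = 0 := by
  have e1 := slag_eq' α hα n x
  have e2 : slag α (n+1) x =
      (∑ j ∈ Finset.range (n+1), lc α (n+1) j * x ^ j) + lc α (n+1) (n+1) * x ^ (n+1) := by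
    rw [slag_eq' α hα (n+1) x, Finset.sum_range_succ]
  have e3 : slag α (n+2) x =
      (∑ j ∈ Finset.range (n+1), lc α (n+2) j * x ^ j) + lc α (n+2) (n+1) * x ^ (n+1)
        + lc α (n+2) (n+2) * x ^ (n+2) := by
    rw [slag_eq' α hα (n+2) x, Finset.sum_range_succ, Finset.sum_range_succ]
  have e4 : x * slag α (n+1) x =
      (∑ j ∈ Finset.range (n+1), (if j = 0 then 0 else lc α (n+1) (j-1) * x ^ j))
        + lc α (n+1) n * x ^ (n+1) + lc α (n+1) (n+1) * x ^ (n+2) := by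
    rw [slag_eq' α hα (n+1) x, Finset.mul_sum]
    have h1 : ∀ j, x * (lc α (n+1) j * x ^ j) = lc α (n+1) j * x ^ (j+1) := by
      intro j; ring
    simp only [h1]
    rw [Finset.sum_range_succ, Finset.sum_range_succ]
    have h2 : (∑ j ∈ Finset.range (n+1), (if j = 0 then (0:ℝ) else lc α (n+1) (j-1) * x ^ j))
        = ∑ j ∈ Finset.range n, lc α (n+1) j * x ^ (j+1) := by
      rw [Finset.sum_range_succ']
      simp
    rw [h2]
    try ring
  have hsum : (∑ j ∈ Finset.range (n+1),
      (lc α n j * x ^ j - (2*(n:ℝ)+α+3) * (lc α (n+1) j * x ^ j)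
        + (if j = 0 then 0 else lc α (n+1) (j-1) * x ^ j)
        + ((n:ℝ)+2)*((n:ℝ)+α+2) * (lc α (n+2) j * x ^ j))) = 0 := by
    refine Finset.sum_eq_zero fun j hj => ?_
    have hjn : j ≤ n := by simpa [Nat.lt_succ_iff] using Finset.mem_range.mp hj
    have hint := lc_interior α hα n j hjn
    rcases eq_or_ne j 0 with h0 | h0
    · subst h0
      norm_num at hint ⊢
      linear_combination hint
    · simp only [if_neg h0] at hint ⊢
      linear_combination x ^ j * hint
  have hsplit : (∑ j ∈ Finset.range (n+1),
      (lc α n j * x ^ j - (2*(n:ℝ)+α+3) * (lc α (n+1) j * x ^ j)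
        + (if j = 0 then 0 else lc α (n+1) (j-1) * x ^ j)
        + ((n:ℝ)+2)*((n:ℝ)+α+2) * (lc α (n+2) j * x ^ j)))
      = (∑ j ∈ Finset.range (n+1), lc α n j * x ^ j)
        - (2*(n:ℝ)+α+3) * (∑ j ∈ Finset.range (n+1), lc α (n+1) j * x ^ j)
        + (∑ j ∈ Finset.range (n+1), (if j = 0 then 0 else lc α (n+1) (j-1) * x ^ j))
        + ((n:ℝ)+2)*((n:ℝ)+α+2) * (∑ j ∈ Finset.range (n+1), lc α (n+2) j * x ^ j) := by
    rw [Finset.mul_sum, Finset.mul_sum, ← Finset.sum_sub_distrib, ← Finset.sum_add_distrib,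
      ← Finset.sum_add_distrib]
  have top1 := lc_top1 α hα n
  have top2 := lc_top2 α hα n
  linear_combination e1 - (2*(n:ℝ)+α+3) * e2 + e4 + ((n:ℝ)+2)*((n:ℝ)+α+2) * e3
    + hsum - hsplit + x^(n+1) * top1 + x^(n+2) * top2

lemma slag_zero (α : ℝ) (hα : -1 < α) (x : ℝ) : slag α 0 x = 1 / Real.Gamma (α + 1) := by
  rw [slag_eq' α hα 0 x]
  simp [lc]

lemma slag_base (α : ℝ) (hα : -1 < α) (x : ℝ) :
    -(α + 1 - x) * slag α 0 x + (α + 1) * slag α 1 x = 0 := by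
  rw [slag_eq' α hα 0 x, slag_eq' α hα 1 x]
  simp only [Finset.sum_range_succ, Finset.sum_range_zero, lc]
  have hG0 : Real.Gamma ((0:ℕ) + α + 1) ≠ 0 := (gam_pos α hα 0).ne'
  have hG1 : Real.Gamma ((1:ℕ) + α + 1) ≠ 0 := (gam_pos α hα 1).ne'
  have hg := gam_succ α hα 0
  push_cast at hG0 hG1 hg ⊢
  rw [zero_add] at hG0 hg
  rw [zero_add] at hg
  norm_num
  rw [hg] at hG1 ⊢
  have hne : α + 1 ≠ 0 := by intro h; linarith
  field_simp
  ring

lemma slagZ_rec (α : ℝ) (hα : -1 < α) (n : ℤ) (x : ℝ) :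
    slagZ α (n-1) x - (2*(n:ℝ)+α+1-x) * slagZ α n x
      + ((n:ℝ)+1)*((n:ℝ)+α+1) * slagZ α (n+1) x = 0 := by
  rcases lt_trichotomy n 0 with hn | rfl | hn
  · rcases eq_or_ne n (-1) with rfl | hne
    · have h1 : ¬ ((0:ℤ) ≤ -1-1) := by omega
      have h2 : ¬ ((0:ℤ) ≤ -1) := by omega
      simp only [slagZ, if_neg h1, if_neg h2]
      push_cast
      ring
    · have h1 : ¬ ((0:ℤ) ≤ n-1) := by omega
      have h2 : ¬ ((0:ℤ) ≤ n) := by omega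
      have h3 : ¬ ((0:ℤ) ≤ n+1) := by omega
      simp only [slagZ, if_neg h1, if_neg h2, if_neg h3]
      ring
  · have h1 : ¬ ((0:ℤ) ≤ 0-1) := by omega
    simp only [slagZ, if_neg h1, if_pos (le_refl (0:ℤ)), if_pos (by omega : (0:ℤ) ≤ 0+1)]
    have ht0 : (0:ℤ).toNat = 0 := rfl
    have ht1 : ((0:ℤ)+1).toNat = 1 := rfl
    rw [ht0, ht1]
    have := slag_base α hα x
    push_cast
    linear_combination this
  · obtain ⟨m, rfl⟩ : ∃ m : ℕ, n = (m : ℤ) + 1 := ⟨(n-1).toNat, by omega⟩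
    have h1 : (0:ℤ) ≤ (m:ℤ)+1-1 := by omega
    have h2 : (0:ℤ) ≤ (m:ℤ)+1 := by omega
    have h3 : (0:ℤ) ≤ (m:ℤ)+1+1 := by omega
    simp only [slagZ, if_pos h1, if_pos h2, if_pos h3]
    have ht1 : ((m:ℤ)+1-1).toNat = m := by omega
    have ht2 : ((m:ℤ)+1).toNat = m+1 := by omega
    have ht3 : ((m:ℤ)+1+1).toNat = m+2 := by omega
    rw [ht1, ht2, ht3]
    have := slag_rec_succ α hα m x
    push_cast
    linear_combination this


/-- Theorem 1 (th.trzecie): explicit solution of a triangular chain of m+1 coupled cut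
Laguerre recursions. If kᵢ = (α_m−αᵢ)/2 are positive integers, qᵢ = 1−kᵢ+k_{i+1}, and x is
a root of L^{α_m}_{κ+1}, then aⁱ_j = a₀·(∏_{t=i}^{m−1} 4χ_t/(α_m²−α_t²))·Γ(α_m+1)·
L^{α_m}_{j−kᵢ}(x) solves all the coupled recursions (with L^{α_m}_n = 0 for n < 0), the
boundary condition aᵐ_{κ+1} = 0 holds, and the solution is nontrivial when a₀ ≠ 0. -/
theorem coupled_cut_laguerre_chain_solution (m κ : ℕ) (α χ : ℕ → ℝ) (k : ℕ → ℕ)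
    (hα : ∀ i ≤ m, α i > -1)
    (hk : ∀ i < m, 0 < k i) (hkm : k m = 0)
    (hαk : ∀ i < m, α m = α i + 2 * (k i : ℝ))
    (x : ℝ) (hroot : slag (α m) (κ + 1) x = 0)
    (a0 : ℝ) (a : ℕ → ℤ → ℝ)
    (ha : ∀ i ≤ m, ∀ j : ℤ,
      a i j = a0 * (∏ t ∈ Finset.Ico i m, 4 * χ t / ((α m) ^ 2 - (α t) ^ 2)) *
        Real.Gamma (α m + 1) * slagZ (α m) (j - (k i : ℤ)) x) :
    (∀ i < m, ∀ j : ℤ, 0 ≤ j →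
      a i (j - 1) - (2 * (j : ℝ) + α i + 1 - x) * a i j
        + ((j : ℝ) + 1) * ((j : ℝ) + α i + 1) * a i (j + 1)
        - χ i * a (i + 1) (j + (1 - (k i : ℤ) + (k (i + 1) : ℤ))) = 0) ∧
    (∀ j : ℤ, 0 ≤ j →
      a m (j - 1) - (2 * (j : ℝ) + α m + 1 - x) * a m j
        + ((j : ℝ) + 1) * ((j : ℝ) + α m + 1) * a m (j + 1) = 0) ∧
    a m ((κ : ℤ) + 1) = 0 ∧
    (a0 ≠ 0 → ∃ i ≤ m, ∃ j : ℤ, a i j ≠ 0) := by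
  have hαm : (-1:ℝ) < α m := hα m le_rfl
  refine ⟨?_, ?_, ?_, ?_⟩
  · -- coupled recursions
    intro i hi j _
    have hile : i ≤ m := hi.le
    rw [ha i hile (j-1), ha i hile j, ha i hile (j+1),
      ha (i+1) hi (j + (1 - (k i : ℤ) + (k (i+1) : ℤ)))]
    have e1 : j - 1 - (k i : ℤ) = (j - (k i : ℤ)) - 1 := by ring
    have e2 : j + 1 - (k i : ℤ) = (j - (k i : ℤ)) + 1 := by ring
    have e3 : j + (1 - (k i : ℤ) + (k (i+1) : ℤ)) - (k (i+1) : ℤ) = (j - (k i : ℤ)) + 1 := by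
      ring
    rw [e1, e2, e3]
    have hrec := slagZ_rec (α m) hαm (j - (k i : ℤ)) x
    have hki := hαk i hi
    push_cast at hrec
    have key : slagZ (α m) ((j - (k i : ℤ)) - 1) x
        - (2*(j:ℝ) + α i + 1 - x) * slagZ (α m) (j - (k i : ℤ)) x
        + ((j:ℝ)+1)*((j:ℝ) + α i + 1) * slagZ (α m) ((j - (k i : ℤ)) + 1) x
        = ((k i : ℝ) * (α i + (k i : ℝ))) * slagZ (α m) ((j - (k i : ℤ)) + 1) x := by
      linear_combination hrec + (slagZ (α m) (j - (k i : ℤ)) x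
        - ((j:ℝ) - (k i : ℝ) + 1) * slagZ (α m) ((j - (k i : ℤ)) + 1) x) * hki
    have hP : (∏ t ∈ Finset.Ico i m, 4 * χ t / ((α m) ^ 2 - (α t) ^ 2))
        = (4 * χ i / ((α m) ^ 2 - (α i) ^ 2)) *
          ∏ t ∈ Finset.Ico (i+1) m, 4 * χ t / ((α m) ^ 2 - (α t) ^ 2) :=
      Finset.prod_eq_prod_Ico_succ_bot hi _
    rw [hP]
    have hαi : (-1:ℝ) < α i := hα i hile
    have hk1 : (1:ℝ) ≤ (k i : ℝ) := by exact_mod_cast hk i hi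
    have hD : (α m) ^ 2 - (α i) ^ 2 = 4 * (k i : ℝ) * (α i + (k i : ℝ)) := by
      rw [hki]; ring
    have hDne : (α m) ^ 2 - (α i) ^ 2 ≠ 0 := by
      rw [hD]; nlinarith
    have hQK : (4 * χ i / ((α m) ^ 2 - (α i) ^ 2)) * ((k i : ℝ) * (α i + (k i : ℝ))) = χ i := by
      rw [hD] at hDne ⊢
      rw [div_mul_eq_mul_div, div_eq_iff hDne]
      ring
    linear_combination
      (a0 * (4 * χ i / ((α m) ^ 2 - (α i) ^ 2)) *
        (∏ t ∈ Finset.Ico (i+1) m, 4 * χ t / ((α m) ^ 2 - (α t) ^ 2)) *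
        Real.Gamma (α m + 1)) * key
      + (a0 * (∏ t ∈ Finset.Ico (i+1) m, 4 * χ t / ((α m) ^ 2 - (α t) ^ 2)) *
        Real.Gamma (α m + 1) * slagZ (α m) ((j - (k i : ℤ)) + 1) x) * hQK
  · -- top recursion
    intro j _
    rw [ha m le_rfl (j-1), ha m le_rfl j, ha m le_rfl (j+1)]
    simp only [hkm, Nat.cast_zero, sub_zero]
    have hrec := slagZ_rec (α m) hαm j x
    linear_combination (a0 * (∏ t ∈ Finset.Ico m m, 4 * χ t / ((α m) ^ 2 - (α t) ^ 2)) *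
      Real.Gamma (α m + 1)) * hrec
  · -- boundary
    rw [ha m le_rfl ((κ:ℤ)+1)]
    simp only [hkm, Nat.cast_zero, sub_zero]
    have h1 : (0:ℤ) ≤ (κ:ℤ) + 1 := by omega
    have h2 : ((κ:ℤ)+1).toNat = κ + 1 := by omega
    rw [slagZ, if_pos h1, h2, hroot]
    ring
  · -- nontriviality
    intro h0
    refine ⟨m, le_rfl, 0, ?_⟩
    rw [ha m le_rfl 0]
    simp only [hkm, Nat.cast_zero, sub_zero, Finset.Ico_self, Finset.prod_empty, mul_one]
    have h1 : (0:ℤ) ≤ (0:ℤ) := le_refl _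
    rw [slagZ, if_pos h1]
    have ht : (0:ℤ).toNat = 0 := rfl
    rw [ht, slag_zero (α m) hαm x]
    have hG : Real.Gamma (α m + 1) ≠ 0 := by
      have : (0:ℝ) < α m + 1 := by linarith
      exact (Real.Gamma_pos_of_pos this).ne'
    field_simp
    exact h0
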